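/- arXiv:2411.02122 — 5 statements merged into one kernel-verified Lean document; each statement's English description precedes it below -/
import Mathlib

section
/- For every graph G, every tree decomposition V of G, every family F of connected subgraphs of G, and every nonnegative integer d, either (1) there are d+1 pairwise vertex-disjoint subgraphs in F, or (2) there is a set Z ⊆ V(G) that is the union of at most d bags of V such that V(F) ∩ Z ≠ ∅ for every F ∈ F. -/
open SimpleGraph

section Defs

variable {V : Type*} {ι : Type*} {α : Type*}

/-- `G` has no `K_t`-minor: there is no family of `t` pairwise disjoint nonempty connected
vertex sets with an edge of `G` between any two of them. -/
def CliqueMinorFree (G : SimpleGraph V) (t : ℕ) : Prop :=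
  ¬ ∃ B : Fin t → Set V,
      (∀ i, (G.induce (B i)).Connected) ∧
      (∀ i j, i ≠ j → Disjoint (B i) (B j)) ∧
      (∀ i j, i ≠ j → ∃ u ∈ B i, ∃ w ∈ B j, G.Adj u w)

/-- `(T, W)` is a tree decomposition of `G`. -/
structure IsTreeDecomp (G : SimpleGraph V) (T : SimpleGraph ι) (W : ι → Set V) : Prop where
  isTree : T.IsTree
  bagsConnected : ∀ u : V, (T.induce {x : ι | u ∈ W x}).Connected
  edgeInBag : ∀ ⦃u w : V⦄, G.Adj u w → ∃ x, u ∈ W x ∧ w ∈ W x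

/-- The tree decomposition with bags `W` has width at most `w`. -/
def TDWidthLE (W : ι → Set V) (w : ℕ) : Prop := ∀ x, (W x).ncard ≤ w + 1

/-- `φ` is a `p`-centered coloring of `G`: every nonempty connected subgraph on which `φ`
uses at most `p` colors has a vertex of unique color. -/
def IsCenteredColoring (p : ℕ) (G : SimpleGraph V) (φ : V → α) : Prop :=
  ∀ H : G.Subgraph, H.Connected →
    p < (φ '' H.verts).ncard ∨ ∃ u ∈ H.verts, ∀ w ∈ H.verts, w ≠ u → φ w ≠ φ u

/-- The `p`-centered chromatic number of `G`. -/
noncomputable def centeredChromaticNumber (p : ℕ) (G : SimpleGraph V) : ℕ :=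
  sInf {k | ∃ φ : V → Fin k, IsCenteredColoring p G φ}

/-- `φ` is a `p`-centered coloring of `(G, σ)`: on every nonempty connected subgraph either
more than `p` colors are used, or the `σ`-minimal vertex has a unique color. -/
def IsOrderedCenteredColoring (p : ℕ) (G : SimpleGraph V) (σ : V → ℕ) (φ : V → α) : Prop :=
  ∀ H : G.Subgraph, H.Connected →
    p < (φ '' H.verts).ncard ∨
      ∃ u ∈ H.verts, (∀ w ∈ H.verts, σ u ≤ σ w) ∧ ∀ w ∈ H.verts, w ≠ u → φ w ≠ φ u

/-- The `p`-centered chromatic number of `(G, σ)`. -/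
noncomputable def orderedCenteredChromaticNumber (p : ℕ) (G : SimpleGraph V) (σ : V → ℕ) : ℕ :=
  sInf {k | ∃ φ : V → Fin k, IsOrderedCenteredColoring p G σ φ}

/-- `σ` (an injection into `ℕ`, representing a linear ordering of the vertices) is an
elimination ordering of the tree decomposition with bags `W`. -/
def IsEliminationOrdering (W : ι → Set V) (σ : V → ℕ) : Prop :=
  Function.Injective σ ∧
    ∀ u : V, ∃ x : ι, ∀ w : V, (∃ z, u ∈ W z ∧ w ∈ W z) → σ w < σ u → w ∈ W x

/-- `Pa` is a partition of the vertex set into nonempty parts. -/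
def IsVertexPartition (Pa : Set (Set V)) : Prop :=
  (∀ P ∈ Pa, P.Nonempty) ∧ ∀ u : V, ∃! P, P ∈ Pa ∧ u ∈ P

/-- The quotient graph `G/Pa`. -/
def quotientGraph (G : SimpleGraph V) (Pa : Set (Set V)) : SimpleGraph Pa where
  Adj P Q := P ≠ Q ∧ ∃ u ∈ (P : Set V), ∃ w ∈ (Q : Set V), G.Adj u w
  symm := by
    constructor
    rintro P Q ⟨hPQ, u, hu, w, hw, hadj⟩
    exact ⟨hPQ.symm, w, hw, u, hu, hadj.symm⟩
  loopless := by constructor; rintro P ⟨h, -⟩; exact h rfl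

/-- The neighborhood of a set of vertices. -/
def nbhdSet (G : SimpleGraph V) (S : Set V) : Set V :=
  {w | w ∉ S ∧ ∃ u ∈ S, G.Adj u w}

/-- `C` is (the vertex set of) a connected component of `G - Z`. -/
def IsCompOfDel (G : SimpleGraph V) (Z C : Set V) : Prop :=
  Disjoint C Z ∧ (G.induce C).Connected ∧
    ∀ u ∈ C, ∀ w, G.Adj u w → w ∉ Z → w ∈ C

/-- The neighborhood of a set of vertices in a subgraph. -/
def subNbhdSet {G : SimpleGraph V} (G₀ : G.Subgraph) (S : Set V) : Set V :=
  {w | w ∉ S ∧ ∃ u ∈ S, G₀.Adj u w}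

/-- `C` is (the vertex set of) a connected component of `G₀ - Z`, for a subgraph `G₀`. -/
def IsCompOfSubDel {G : SimpleGraph V} (G₀ : G.Subgraph) (Z C : Set V) : Prop :=
  C ⊆ G₀.verts \ Z ∧ (G₀.induce C).Connected ∧
    ∀ u ∈ C, ∀ w ∈ G₀.verts \ Z, G₀.Adj u w → w ∈ C

/-- `φ` is a `(p,c)`-good coloring of `G`. -/
def IsGoodColoring (p c : ℕ) (G : SimpleGraph V) (φ : V → ℕ) : Prop :=
  ∀ G₀ : G.Subgraph, ∀ 𝓕 : Set G.Subgraph,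
    (∀ F ∈ 𝓕, F ≤ G₀ ∧ F.Connected) →
    ∀ d : ℕ, 0 < d →
      (¬ ∃ f : Fin (d + 1) → G.Subgraph,
          (∀ i, f i ∈ 𝓕) ∧ ∀ i j, i ≠ j → Disjoint (f i).verts (f j).verts) →
      ∃ Z : Set V, Z ⊆ G₀.verts ∧ ∃ ψ : V → ℕ,
        (∀ u ∈ Z, 1 ≤ ψ u ∧ ψ u ≤ c * d) ∧
        (∀ F ∈ 𝓕, (F.verts ∩ Z).Nonempty) ∧
        (∀ H : G.Subgraph, H ≤ G₀ → H.Connected → (H.verts ∩ Z).Nonempty →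
          p < (φ '' H.verts).ncard ∨
            ∃ u ∈ H.verts ∩ Z, ∀ w ∈ H.verts ∩ Z, w ≠ u → (φ w, ψ w) ≠ (φ u, ψ u)) ∧
        (∀ C : Set V, IsCompOfSubDel G₀ Z C →
          ∃ D₁ D₂ : Set V, ∀ D, IsCompOfSubDel G₀ C D →
            (subNbhdSet G₀ C ∩ D).Nonempty → D = D₁ ∨ D = D₂)

/-- Adjacency in the torso of `W` in `G`: two distinct vertices of `W` joined by a
walk of `G` all of whose internal vertices avoid `W`. -/
def TorsoAdj (G : SimpleGraph V) (W : Set V) (u w : V) : Prop :=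
  u ∈ W ∧ w ∈ W ∧ u ≠ w ∧
    ∃ q : G.Walk u w, ∀ x ∈ q.support, x ∈ W → x = u ∨ x = w

/-- The torso of `W` in `G`. -/
def torso (G : SimpleGraph V) (W : Set V) : SimpleGraph W where
  Adj u w := TorsoAdj G W ↑u ↑w
  symm := by
    constructor
    intro u w h
    obtain ⟨hu, hw, hne, q, hq⟩ := h
    exact ⟨hw, hu, hne.symm, q.reverse, fun x hx hxW => by
      rw [Walk.support_reverse, List.mem_reverse] at hx
      exact (hq x hx hxW).symm⟩
  loopless := by
    constructor
    intro u h
    exact h.2.2.1 rfl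

/-- In the tree `T` rooted at `r`, the vertex `u` is an ancestor of `w`
(i.e. `u` lies on every walk from the root to `w`). -/
def IsAncestor (T : SimpleGraph α) (r u w : α) : Prop :=
  ∀ q : T.Walk r w, u ∈ q.support

/-- `x` is the lowest common ancestor of `u` and `w` in the tree `T` rooted at `r`. -/
def IsLCA (T : SimpleGraph α) (r x u w : α) : Prop :=
  IsAncestor T r x u ∧ IsAncestor T r x w ∧
    ∀ y, IsAncestor T r y u → IsAncestor T r y w → IsAncestor T r y x

/-- The lowest common ancestor closure of `Y` in the tree `T` rooted at `r`. -/
def lcaClosure (T : SimpleGraph α) (r : α) (Y : Set α) : Set α :=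
  {x | ∃ u ∈ Y, ∃ w ∈ Y, IsLCA T r x u w}

/-- The vertex set of `T_{x|y}`: the component of `x` in `T` minus the edge `xy`.
(For adjacent `x y` in a tree these are the vertices `z` such that
the path from `z` to `y` passes through `x`.) -/
def sideVerts (T : SimpleGraph α) (x y : α) : Set α :=
  {z | ∀ q : T.Walk z y, x ∈ q.support}

/-- The tree decomposition `(T, W)` of `G` is natural. -/
def IsNaturalTD (G : SimpleGraph V) (T : SimpleGraph ι) (W : ι → Set V) : Prop :=
  ∀ x y, T.Adj x y → (G.induce (⋃ z ∈ sideVerts T x y, W z)).Connected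

end Defs


open SimpleGraph

section TreeAux

variable {ι : Type*} {T : SimpleGraph ι}

/-- In an acyclic graph, every edge of a path between `u` and `w` lies on every walk
between `u` and `w`. -/
lemma edge_mem_walk_of_mem_path (hT : T.IsAcyclic) :
    ∀ {u w : ι} (p : T.Walk u w), p.IsPath → ∀ e ∈ p.edges, ∀ q : T.Walk u w, e ∈ q.edges := by
  intro u w p
  induction p with
  | nil => intro _ e he; simp at he
  | @cons a b c h p ih =>
    intro hp e he q
    rw [Walk.edges_cons, List.mem_cons] at he
    rw [Walk.cons_isPath_iff] at hp
    rcases he with rfl | he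
    · have hbridge := (isAcyclic_iff_forall_adj_isBridge.mp hT) h
      rw [isBridge_iff_adj_and_forall_walk_mem_edges] at hbridge
      have hmem := hbridge (q.append p.reverse)
      rw [Walk.edges_append, List.mem_append] at hmem
      rcases hmem with h1 | h1
      · exact h1
      · rw [Walk.edges_reverse, List.mem_reverse] at h1
        exact absurd (Walk.fst_mem_support_of_mem_edges p h1) hp.2
    · have hmem := ih hp.1 e he (Walk.cons h.symm q)
      rw [Walk.edges_cons, List.mem_cons] at hmem
      rcases hmem with heq | h1
      · subst heq
        exact absurd (Walk.snd_mem_support_of_mem_edges p he) hp.2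
      · exact h1

/-- In a tree, every path has length equal to the distance between its endpoints. -/
lemma tree_path_length_eq_dist (hT : T.IsTree) {u w : ι} (p : T.Walk u w) (hp : p.IsPath) :
    p.length = T.dist u w := by
  obtain ⟨q, hq⟩ := (hT.isConnected u w).exists_walk_length_eq_dist
  have hsub : p.edges ⊆ q.edges := fun e he => edge_mem_walk_of_mem_path hT.IsAcyclic p hp e he q
  have h1 : p.edges.length ≤ q.edges.length := (hp.edges_nodup.subperm hsub).length_le
  rw [Walk.length_edges, Walk.length_edges] at h1
  exact le_antisymm (hq ▸ h1) (SimpleGraph.dist_le p)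

lemma tree_path_unique (hT : T.IsTree) {u w : ι} (p q : T.Walk u w) (hp : p.IsPath)
    (hq : q.IsPath) : p = q := by
  obtain ⟨P, -, hP⟩ := hT.existsUnique_path u w
  rw [hP p hp, hP q hq]

lemma tree_dist_add_of_mem_path [DecidableEq ι] (hT : T.IsTree) {u w y : ι} (p : T.Walk u w)
    (hp : p.IsPath) (hy : y ∈ p.support) : T.dist u w = T.dist u y + T.dist y w := by
  have h1 := tree_path_length_eq_dist hT (p.takeUntil y hy) (hp.takeUntil hy)
  have h2 := tree_path_length_eq_dist hT (p.dropUntil y hy) (hp.dropUntil hy)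
  have h3 := tree_path_length_eq_dist hT p hp
  have h4 := congrArg Walk.length (p.take_spec hy)
  rw [Walk.length_append] at h4
  omega

/-- Every vertex of a path between two vertices of a connected set lies in the set. -/
lemma tree_path_support_subset [DecidableEq ι] (hT : T.IsTree) {S : Set ι}
    (hS : (T.induce S).Connected) {a b : ι} (ha : a ∈ S) (hb : b ∈ S)
    (p : T.Walk a b) (hp : p.IsPath) : ∀ y ∈ p.support, y ∈ S := by
  obtain ⟨q⟩ := hS.preconnected ⟨a, ha⟩ ⟨b, hb⟩
  let f : T.induce S →g T := ⟨Subtype.val, fun h => h⟩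
  have hW : ∀ y ∈ (q.map f).bypass.support, y ∈ S := by
    intro y hy
    have := (q.map f).support_bypass_subset hy
    rw [Walk.support_map, List.mem_map] at this
    obtain ⟨⟨z, hz⟩, -, rfl⟩ := this
    exact hz
  have := tree_path_unique hT p (q.map f).bypass hp (q.map f).bypass_isPath
  rw [this]
  exact fun y hy => hW y hy


section TreeAux2

variable {ι : Type*} {T : SimpleGraph ι} [DecidableEq ι]

/-- A depth-minimal vertex of a connected set lies on the path from the root to any
vertex of the set. -/
lemma tree_top_mem_path (hT : T.IsTree) (r : ι) {S : Set ι} (hS : (T.induce S).Connected)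
    {x : ι} (hx : x ∈ S) (hmin : ∀ y ∈ S, T.dist r x ≤ T.dist r y) :
    ∀ z ∈ S, ∀ P : T.Walk r z, P.IsPath → x ∈ P.support := by
  have key : ∀ n, ∀ z ∈ S, T.dist x z = n → ∀ P : T.Walk r z, P.IsPath → x ∈ P.support := by
    intro n
    induction n using Nat.strong_induction_on with
    | _ n ih =>
      intro z hz hdist P hP
      by_cases hxr : x = r
      · subst hxr; exact P.start_mem_support
      by_cases hxz : x = z
      · subst hxz; exact P.end_mem_support
      have hrz : r ≠ z := by
        rintro rfl
        have h0 : T.dist r x = 0 := Nat.le_zero.mp (by simpa only [SimpleGraph.dist_self] using hmin _ hz)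
        exact hxr ((hT.isConnected.dist_eq_zero_iff).mp (by rwa [SimpleGraph.dist_comm] at h0))
      -- the path from x to z, inside S
      obtain ⟨p, hp, -⟩ := hT.existsUnique_path x z
      have hpS : ∀ y ∈ p.support, y ∈ S := tree_path_support_subset hT hS hx hz p hp
      -- penultimate vertex y of p
      obtain ⟨y, hyz, p', hp'⟩ :=
        Walk.exists_eq_cons_of_ne (fun h => hxz h.symm) p.reverse
      have hyP : y ∈ p.support := by
        have : y ∈ p.reverse.support := by rw [hp']; simp
        rwa [Walk.support_reverse, List.mem_reverse] at this
      have hyS : y ∈ S := hpS y hyP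
      have hyne : y ≠ z := by
        have := hp.reverse
        rw [hp', Walk.cons_isPath_iff] at this
        exact fun h => this.2 (h ▸ p'.start_mem_support)
      have hedgep : s(y, z) ∈ p.edges := by
        have : s(z, y) ∈ p.reverse.edges := by rw [hp']; simp
        rw [Walk.edges_reverse, List.mem_reverse] at this
        rwa [Sym2.eq_swap] at this
      have hdyz : T.dist y z = 1 := SimpleGraph.dist_eq_one_iff_adj.mpr hyz.symm
      have hsplit : T.dist x z = T.dist x y + T.dist y z :=
        tree_dist_add_of_mem_path hT p hp hyP
      have hlt : T.dist x y < n := by omega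
      -- penultimate vertex y* of P
      obtain ⟨ys, hysz, P', hP'⟩ :=
        Walk.exists_eq_cons_of_ne (fun h => hrz h.symm) P.reverse
      by_cases hyy : ys = y
      · subst hyy
        have hysP : ys ∈ P.support := by
          have : ys ∈ P.reverse.support := by rw [hP']; simp
          rwa [Walk.support_reverse, List.mem_reverse] at this
        have := ih (T.dist x ys) hlt ys hyS rfl (P.takeUntil ys hysP) (hP.takeUntil hysP)
        exact P.support_takeUntil_subset hysP this
      · exfalso
        obtain ⟨q, hq, -⟩ := hT.existsUnique_path x r
        have hWk : s(y, z) ∈ (q.append P).edges :=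
          edge_mem_walk_of_mem_path hT.IsAcyclic p hp _ hedgep (q.append P)
        rw [Walk.edges_append, List.mem_append] at hWk
        rcases hWk with h1 | h1
        · -- z on the path from x to r : contradiction with minimality
          have hzq : z ∈ q.support := Walk.snd_mem_support_of_mem_edges q h1
          have := tree_dist_add_of_mem_path hT q hq hzq
          have hxz1 : 1 ≤ T.dist x z := by
            have : T.dist x z ≠ 0 := fun h =>
              hxz ((hT.isConnected.dist_eq_zero_iff).mp h)
            omega
          have hc1 : T.dist r x ≤ T.dist r z := hmin z hz
          have e1 : T.dist x r = T.dist r x := SimpleGraph.dist_comm ..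
          have e2 : T.dist z r = T.dist r z := SimpleGraph.dist_comm ..
          omega
        · -- s(y,z) is an edge of P, hence y = ys
          apply hyy
          have h2 : s(y, z) ∈ P.reverse.edges := by
            rw [Walk.edges_reverse, List.mem_reverse]; exact h1
          rw [hP', Walk.edges_cons, List.mem_cons] at h2
          rcases h2 with heq | h3
          · rw [Sym2.eq_iff] at heq
            rcases heq with ⟨h4, h5⟩ | ⟨h4, h5⟩
            · exact absurd h4 hyne
            · exact h4.symm
          · exfalso
            have hzP' : z ∈ P'.support := Walk.snd_mem_support_of_mem_edges P' h3
            have := hP.reverse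
            rw [hP', Walk.cons_isPath_iff] at this
            exact this.2 hzP'
  intro z hz P hP
  exact key (T.dist x z) z hz rfl P hP

end TreeAux2
end TreeAux
section TreeHelly

variable {ι : Type} [Fintype ι] {T : SimpleGraph ι}

lemma tree_helly [DecidableEq ι] {β : Type*} (hT : T.IsTree) (SS : β → Set ι) :
    ∀ (d : ℕ) (𝓕 : Set β), (∀ F ∈ 𝓕, (T.induce (SS F)).Connected) →
    (∃ f : Fin (d + 1) → β, (∀ i, f i ∈ 𝓕) ∧
        ∀ i j, i ≠ j → Disjoint (SS (f i)) (SS (f j))) ∨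
      ∃ s : Set ι, s.ncard ≤ d ∧ ∀ F ∈ 𝓕, (SS F ∩ s).Nonempty := by
  intro d
  induction d with
  | zero =>
    intro 𝓕 hconn
    rcases Set.eq_empty_or_nonempty 𝓕 with rfl | ⟨F₀, hF₀⟩
    · right; exact ⟨∅, by simp, by simp⟩
    · left
      exact ⟨fun _ => F₀, fun _ => hF₀, fun i j hij => absurd (Fin.ext (by omega)) hij⟩
  | succ d ih =>
    intro 𝓕 hconn
    rcases Set.eq_empty_or_nonempty 𝓕 with rfl | ⟨F₁, hF₁⟩
    · right; exact ⟨∅, by simp, by simp⟩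
    have hneι : Nonempty ι := hT.isConnected.nonempty
    let r : ι := Classical.arbitrary ι
    -- the "top depth" of a set
    let td : Set ι → ℕ := fun S => sInf (T.dist r '' S)
    -- nonemptiness of the relevant sets
    have hSne : ∀ F ∈ 𝓕, (SS F).Nonempty := fun F hF =>
      Set.nonempty_coe_sort.mp (hconn F hF).nonempty
    have htop : ∀ F ∈ 𝓕, ∃ x ∈ SS F, T.dist r x = td (SS F) ∧
        ∀ y ∈ SS F, T.dist r x ≤ T.dist r y := by
      intro F hF
      have hne : (T.dist r '' SS F).Nonempty := (hSne F hF).image _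
      obtain ⟨x, hxS, hxd⟩ := Nat.sInf_mem hne
      exact ⟨x, hxS, hxd, fun y hy => by
        rw [hxd]; exact Nat.sInf_le ⟨y, hy, rfl⟩⟩
    -- maximize the top depth
    have hA : ∃ F₀ ∈ 𝓕, ∀ F ∈ 𝓕, td (SS F) ≤ td (SS F₀) := by
      obtain ⟨A₀, ⟨F₀, hF₀, rfl⟩, hmax⟩ :=
        Set.exists_max_image (SS '' 𝓕) td (Set.toFinite _) ⟨SS F₁, F₁, hF₁, rfl⟩
      exact ⟨F₀, hF₀, fun F hF => hmax _ ⟨F, hF, rfl⟩⟩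
    obtain ⟨F₀, hF₀, hmax⟩ := hA
    obtain ⟨x₀, hx₀S, hx₀d, hx₀min⟩ := htop F₀ hF₀
    -- the key claim
    have claim : ∀ F ∈ 𝓕, (SS F ∩ SS F₀).Nonempty → x₀ ∈ SS F := by
      rintro F hF ⟨z, hzF, hzF₀⟩
      obtain ⟨x', hx'S, hx'd, hx'min⟩ := htop F hF
      have hle : T.dist r x' ≤ T.dist r x₀ := by
        rw [hx'd, hx₀d]; exact hmax F hF
      obtain ⟨P, hP, -⟩ := hT.existsUnique_path r z
      have hx₀P : x₀ ∈ P.support :=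
        tree_top_mem_path hT r (hconn F₀ hF₀) hx₀S hx₀min z hzF₀ P hP
      have hx'P : x' ∈ P.support :=
        tree_top_mem_path hT r (hconn F hF) hx'S hx'min z hzF P hP
      have hsplit : x₀ ∈ (P.takeUntil x' hx'P).support ∨
          x₀ ∈ (P.dropUntil x' hx'P).support := by
        rw [← Walk.mem_support_append_iff, P.take_spec hx'P]; exact hx₀P
      rcases hsplit with hcase | hcase
      · -- then x₀ = x'
        have h1 := tree_dist_add_of_mem_path hT (P.takeUntil x' hx'P)
          (hP.takeUntil hx'P) hcase
        have h2 := tree_path_length_eq_dist hT (P.takeUntil x' hx'P) (hP.takeUntil hx'P)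
        have h3 : T.dist x₀ x' = 0 := by omega
        have : x₀ = x' := (hT.isConnected.dist_eq_zero_iff).mp h3
        rw [this]; exact hx'S
      · exact tree_path_support_subset hT (hconn F hF) hx'S hzF
          (P.dropUntil x' hx'P) (hP.dropUntil hx'P) x₀ hcase
    -- recurse on the family avoiding x₀
    set 𝓕' : Set β := {F | F ∈ 𝓕 ∧ x₀ ∉ SS F} with h𝓕'
    rcases ih 𝓕' (fun F hF => hconn F hF.1) with ⟨f', hf1, hf2⟩ | ⟨s', hs1, hs2⟩
    · left
      have key : ∀ k : Fin (d + 1), Disjoint (SS (f' k)) (SS F₀) := by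
        intro k
        rw [Set.disjoint_iff_inter_eq_empty]
        by_contra h
        exact (hf1 k).2 (claim _ (hf1 k).1 (Set.nonempty_iff_ne_empty.mpr h))
      refine ⟨fun i => if h : (i : ℕ) < d + 1 then f' ⟨i, h⟩ else F₀, fun i => ?_, ?_⟩
      · dsimp only; split
        · exact (hf1 _).1
        · exact hF₀
      · intro i j hij
        dsimp only
        split <;> split
        · apply hf2
          intro hc
          have h2 : (⟨(i:ℕ), ‹_›⟩ : Fin (d+1)).val = (⟨(j:ℕ), ‹_›⟩ : Fin (d+1)).val :=
            congrArg Fin.val hc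
          exact hij (Fin.ext h2)
        · exact key _
        · exact (key _).symm
        · exfalso
          have hi := i.isLt
          have hj := j.isLt
          exact hij (Fin.ext (by omega))
    · right
      refine ⟨insert x₀ s', le_trans (Set.ncard_insert_le _ _) (by omega), fun F hF => ?_⟩
      by_cases hx : x₀ ∈ SS F
      · exact ⟨x₀, hx, Set.mem_insert _ _⟩
      · obtain ⟨x, hx1, hx2⟩ := hs2 F ⟨hF, hx⟩
        exact ⟨x, hx1, Set.mem_insert_of_mem _ hx2⟩

end TreeHelly

section BagAux

variable {V : Type} {ι : Type} {G : SimpleGraph V} {T : SimpleGraph ι} {W : ι → Set V}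

lemma bagset_connected (hTD : IsTreeDecomp G T W) (F : G.Subgraph) (hF : F.Connected) :
    (T.induce {x | (W x ∩ F.verts).Nonempty}).Connected := by
  set S : Set ι := {x | (W x ∩ F.verts).Nonempty} with hSdef
  have hBsub : ∀ u ∈ F.verts, {x | u ∈ W x} ⊆ S := fun u hu x hx => ⟨u, hx, hu⟩
  have hreachB : ∀ u, ∀ hu : u ∈ F.verts, ∀ a, ∀ ha : u ∈ W a, ∀ b, ∀ hb : u ∈ W b,
      (T.induce S).Reachable ⟨a, hBsub u hu ha⟩ ⟨b, hBsub u hu hb⟩ := by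
    intro u hu a ha b hb
    have hc := hTD.bagsConnected u
    have hr := hc.preconnected ⟨a, ha⟩ ⟨b, hb⟩
    have hmaps : Set.MapsTo (Hom.id : T →g T) {x | u ∈ W x} S := fun x hx => hBsub u hu hx
    exact hr.map (SimpleGraph.induceHom Hom.id hmaps)
  have main : ∀ (x y : F.verts) (w : F.coe.Walk x y), ∀ a, ∀ ha : (x : V) ∈ W a,
      ∀ b, ∀ hb : (y : V) ∈ W b,
      (T.induce S).Reachable ⟨a, hBsub _ x.2 ha⟩ ⟨b, hBsub _ y.2 hb⟩ := by
    intro x y w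
    induction w with
    | nil => intro a ha b hb; exact hreachB _ (Subtype.coe_prop _) a ha b hb
    | @cons x x' y h w ihw =>
      intro a ha b hb
      obtain ⟨c, hc1, hc2⟩ := hTD.edgeInBag (F.adj_sub h)
      exact (hreachB _ x.2 a ha c hc1).trans (ihw c hc2 b hb)
  have hne : Nonempty ↥S := by
    obtain ⟨u, hu⟩ := hF.nonempty
    obtain ⟨⟨x, hx⟩⟩ := (hTD.bagsConnected u).nonempty
    exact ⟨⟨x, ⟨u, hx, hu⟩⟩⟩
  refine ⟨fun a b => ?_⟩
  obtain ⟨a, haS⟩ := a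
  obtain ⟨b, hbS⟩ := b
  obtain ⟨u, huW, huF⟩ := haS
  obtain ⟨v, hvW, hvF⟩ := hbS
  obtain ⟨w⟩ := hF.coe.preconnected ⟨u, huF⟩ ⟨v, hvF⟩
  exact main _ _ w a huW b hvW

end BagAux


/-- Helly-type property of tree decompositions: for a family `𝓕` of connected
subgraphs of `G`, either there are `d+1` pairwise vertex-disjoint members of `𝓕`, or the
union of at most `d` bags meets every member of `𝓕`. -/
theorem helly_tree_decomposition {V : Type} [Fintype V] {ι : Type} [Fintype ι]
    (G : SimpleGraph V) (T : SimpleGraph ι) (W : ι → Set V)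
    (hTD : IsTreeDecomp G T W)
    (𝓕 : Set G.Subgraph) (h𝓕 : ∀ F ∈ 𝓕, F.Connected) (d : ℕ) :
    (∃ f : Fin (d + 1) → G.Subgraph, (∀ i, f i ∈ 𝓕) ∧
        ∀ i j, i ≠ j → Disjoint (f i).verts (f j).verts) ∨
      ∃ s : Set ι, s.ncard ≤ d ∧
        ∀ F ∈ 𝓕, (F.verts ∩ ⋃ x ∈ s, W x).Nonempty := by
  classical
  set SS : G.Subgraph → Set ι := fun F => {x | (W x ∩ F.verts).Nonempty} with hSS
  rcases tree_helly hTD.isTree SS d 𝓕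
      (fun F hF => bagset_connected hTD F (h𝓕 F hF)) with ⟨f, h1, h2⟩ | ⟨s, h1, h2⟩
  · left
    refine ⟨f, h1, fun i j hij => ?_⟩
    rw [Set.disjoint_left]
    intro u hui huj
    obtain ⟨⟨x, hx⟩⟩ := (hTD.bagsConnected u).nonempty
    exact Set.disjoint_left.mp (h2 i j hij) ⟨u, hx, hui⟩ ⟨u, hx, huj⟩
  · right
    refine ⟨s, h1, fun F hF => ?_⟩
    obtain ⟨x, ⟨u, huW, huF⟩, hxs⟩ := h2 F hF
    exact ⟨u, huF, Set.mem_biUnion hxs huW⟩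
end

section
/- Let m be a positive integer, let T be a rooted tree, and let Y be a set of m vertices of T. Let X = LCA(T,Y) be the lowest common ancestor closure of Y. Then |X| ≤ 2m − 1, and for every component C of T − X, the neighborhood N_T(V(C)) has size at most 2. -/
open SimpleGraph

section Anc
variable {α : Type} [DecidableEq α] {T : SimpleGraph α} {r : α}

noncomputable def pth (hT : T.IsTree) (r u : α) : T.Walk r u := (hT.existsUnique_path r u).choose

lemma pth_isPath (hT : T.IsTree) (r u : α) : (pth hT r u).IsPath := (hT.existsUnique_path r u).choose_spec.1

lemma path_eq_pth (hT : T.IsTree) (r : α) {u : α} (q : T.Walk r u) (hq : q.IsPath) : q = pth hT r u :=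
  (hT.existsUnique_path r u).choose_spec.2 q hq ▸ rfl

lemma isAncestor_iff (hT : T.IsTree) (r : α) {x u : α} : IsAncestor T r x u ↔ x ∈ (pth hT r u).support := by
  constructor
  · exact fun h => h _
  · intro h q
    have h2 : ((q.toPath : T.Walk r u)) = pth hT r u := path_eq_pth hT r _ q.toPath.2
    exact q.support_toPath_subset (h2 ▸ h)

lemma anc_refl (x : α) {r : α} : IsAncestor T r x x := fun q => q.end_mem_support

lemma takeUntil_eq_pth (hT : T.IsTree) (r : α) {x u : α} (h : x ∈ (pth hT r u).support) :
    (pth hT r u).takeUntil x h = pth hT r x :=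
  path_eq_pth hT r _ ((pth_isPath hT r u).takeUntil h)

noncomputable def depth (hT : T.IsTree) (r u : α) : ℕ := (pth hT r u).length

lemma depth_lt_of_mem (hT : T.IsTree) (r : α) {x u : α} (h : x ∈ (pth hT r u).support) (hne : x ≠ u) :
    depth hT r x < depth hT r u := by
  classical
  have hs := (pth hT r u).take_spec h
  have hl := congrArg SimpleGraph.Walk.length hs
  rw [SimpleGraph.Walk.length_append, takeUntil_eq_pth hT r h] at hl
  have hpos : 0 < ((pth hT r u).dropUntil x h).length := by
    rcases Nat.eq_zero_or_pos ((pth hT r u).dropUntil x h).length with h0 | h0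
    · exact absurd (SimpleGraph.Walk.eq_of_length_eq_zero h0) hne
    · exact h0
  simp only [depth]
  omega

lemma anc_antisymm (hT : T.IsTree) (r : α) {x y : α} (h1 : IsAncestor T r x y) (h2 : IsAncestor T r y x) : x = y := by
  by_contra hne
  rw [isAncestor_iff hT r] at h1 h2
  have := depth_lt_of_mem hT r h1 hne
  have := depth_lt_of_mem hT r h2 (Ne.symm hne)
  omega

lemma anc_trans (hT : T.IsTree) (r : α) {x y u : α} (h1 : IsAncestor T r x y) (h2 : IsAncestor T r y u) :
    IsAncestor T r x u := by
  classical
  rw [isAncestor_iff hT r] at h1 h2 ⊢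
  rw [← takeUntil_eq_pth hT r h2] at h1
  exact (pth hT r u).support_takeUntil_subset h2 h1
end Anc

section Anc2
variable {α : Type} [DecidableEq α] {T : SimpleGraph α} {r : α}

lemma append_isPath {a b c : α} {p : T.Walk a b} {q : T.Walk b c}
    (hp : p.IsPath) (hq : q.IsPath)
    (hdisj : ∀ z, z ∈ p.support → z ∈ q.support → z = b) : (p.append q).IsPath := by
  rw [SimpleGraph.Walk.isPath_def, SimpleGraph.Walk.support_append]
  refine List.Nodup.append hp.support_nodup hq.support_nodup.tail ?_
  intro z hz1 hz2
  have hz2' : z ∈ q.support := by rw [q.support_eq_cons]; exact List.mem_cons_of_mem _ hz2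
  have := hdisj z hz1 hz2'
  subst this
  have := hq.support_nodup
  rw [q.support_eq_cons] at this
  exact (List.nodup_cons.mp this).1 hz2

lemma takeUntil_dropUntil_inter {a b c z : α} {p : T.Walk a b} (hp : p.IsPath)
    (h : c ∈ p.support) (h1 : z ∈ (p.takeUntil c h).support)
    (h2 : z ∈ (p.dropUntil c h).support) : z = c := by
  by_contra hne
  have hz2 : z ∈ (p.dropUntil c h).support.tail := by
    rcases List.mem_cons.mp ((p.dropUntil c h).support_eq_cons ▸ h2) with h' | h'
    · exact absurd h' hne
    · exact h'
  have hnodup : (p.support).Nodup := hp.support_nodup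
  rw [← p.take_spec h, SimpleGraph.Walk.support_append] at hnodup
  exact (List.disjoint_of_nodup_append hnodup) h1 hz2

lemma anc_comparable (hT : T.IsTree) (r : α) {x y u : α}
    (hx : IsAncestor T r x u) (hy : IsAncestor T r y u) :
    IsAncestor T r x y ∨ IsAncestor T r y x := by
  rw [isAncestor_iff hT r] at hx hy
  rw [isAncestor_iff hT r, isAncestor_iff hT r]
  set p := pth hT r u with hp
  by_cases hyx : y ∈ (p.takeUntil x hx).support
  · right; rwa [takeUntil_eq_pth hT r hx] at hyx
  · -- y is in the dropUntil part
    have hy' : y ∈ (p.dropUntil x hx).support := by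
      have := hy
      rw [← p.take_spec hx, SimpleGraph.Walk.mem_support_append_iff] at this
      tauto
    have hyne : y ≠ x := by
      intro h; subst h
      exact hyx (SimpleGraph.Walk.end_mem_support _)
    have hy'' : y ∈ (p.dropUntil x hx).support := hy'
    -- build path r → y through x
    set w : T.Walk r y := (p.takeUntil x hx).append ((p.dropUntil x hx).takeUntil y hy'') with hw
    have hwpath : w.IsPath := by
      apply append_isPath ((pth_isPath hT r u).takeUntil hx)
        (((pth_isPath hT r u).dropUntil hx).takeUntil hy'')
      intro z hz1 hz2
      exact takeUntil_dropUntil_inter (pth_isPath hT r u) hx hz1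
        ((p.dropUntil x hx).support_takeUntil_subset hy'' hz2)
    have : w = pth hT r y := path_eq_pth hT r w hwpath
    left
    rw [← this, hw, SimpleGraph.Walk.mem_support_append_iff]
    exact Or.inl (SimpleGraph.Walk.end_mem_support _)

lemma exists_isLCA (hT : T.IsTree) (r : α) [Fintype α] (u w : α) : ∃ c, IsLCA T r c u w := by
  classical
  set s : Finset α := Finset.univ.filter
    (fun z => z ∈ (pth hT r u).support ∧ z ∈ (pth hT r w).support) with hs
  have hr : r ∈ s := by
    simp only [hs, Finset.mem_filter, Finset.mem_univ, true_and]
    exact ⟨SimpleGraph.Walk.start_mem_support _, SimpleGraph.Walk.start_mem_support _⟩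
  obtain ⟨c, hc, hmax⟩ := s.exists_max_image (depth hT r) ⟨r, hr⟩
  simp only [hs, Finset.mem_filter, Finset.mem_univ, true_and] at hc
  refine ⟨c, (isAncestor_iff hT r).mpr hc.1, (isAncestor_iff hT r).mpr hc.2, ?_⟩
  intro y hyu hyw
  have hys : y ∈ s := by
    simp only [hs, Finset.mem_filter, Finset.mem_univ, true_and]
    exact ⟨(isAncestor_iff hT r).mp hyu, (isAncestor_iff hT r).mp hyw⟩
  have hdep := hmax y hys
  rcases anc_comparable hT r ((isAncestor_iff hT r).mpr hc.1) hyu with h | h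
  · by_cases hcy : c = y
    · subst hcy; exact fun q => q.end_mem_support
    · have := depth_lt_of_mem hT r ((isAncestor_iff hT r).mp h) hcy
      omega
  · exact h

lemma isLCA_unique (hT : T.IsTree) (r : α) {c c' u w : α}
    (h : IsLCA T r c u w) (h' : IsLCA T r c' u w) : c = c' :=
  anc_antisymm hT r (h'.2.2 c h.1 h.2.1) (h.2.2 c' h'.1 h'.2.1)

lemma isLCA_symm {c u w : α} (h : IsLCA T r c u w) : IsLCA T r c w u :=
  ⟨h.2.1, h.1, fun y h1 h2 => h.2.2 y h2 h1⟩

lemma isLCA_left {x y : α} (h : IsAncestor T r x y) : IsLCA T r x x y :=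
  ⟨anc_refl x, h, fun _ h1 _ => h1⟩

lemma isLCA_self (u : α) : IsLCA T r u u u := isLCA_left (anc_refl u)

end Anc2

section Anc3
variable {α : Type} [DecidableEq α] [Fintype α] {T : SimpleGraph α} {r : α}

lemma lca_mem_closure (hT : T.IsTree) (r : α) {Y : Set α} {a b c : α}
    (ha : a ∈ lcaClosure T r Y) (hb : b ∈ lcaClosure T r Y) (hc : IsLCA T r c a b) :
    c ∈ lcaClosure T r Y := by
  obtain ⟨u1, hu1, w1, hw1, hA⟩ := ha
  obtain ⟨u2, hu2, w2, hw2, hB⟩ := hb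
  by_cases hab : IsAncestor T r a b
  · have hca : c = a := isLCA_unique hT r hc (isLCA_left hab)
    exact hca ▸ ⟨u1, hu1, w1, hw1, hA⟩
  by_cases hba : IsAncestor T r b a
  · have hcb : c = b := isLCA_unique hT r hc (isLCA_symm (isLCA_left hba))
    exact hcb ▸ ⟨u2, hu2, w2, hw2, hB⟩
  -- incomparable case
  obtain ⟨d, hd⟩ := exists_isLCA hT r u1 u2
  have hda : IsAncestor T r d a := by
    rcases anc_comparable hT r hA.1 hd.1 with h | h
    · exact absurd (anc_comparable hT r (anc_trans hT r h hd.2.1) hB.1)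
        (by rintro (h' | h') <;> [exact hab h'; exact hba h'])
    · exact h
  have hdb : IsAncestor T r d b := by
    rcases anc_comparable hT r hB.1 hd.2.1 with h | h
    · exact absurd (anc_comparable hT r (anc_trans hT r h hd.1) hA.1)
        (by rintro (h' | h') <;> [exact hba h'; exact hab h'])
    · exact h
  have hcd : c = d := anc_antisymm hT r
    (hd.2.2 c (anc_trans hT r hc.1 hA.1) (anc_trans hT r hc.2.1 hB.1))
    (hc.2.2 d hda hdb)
  exact hcd ▸ ⟨u1, hu1, u2, hu2, hd⟩

lemma lca_mem_path (hT : T.IsTree) (r : α) {c x y : α} (hc : IsLCA T r c x y)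
    {q : T.Walk x y} (hq : q.IsPath) : c ∈ q.support := by
  have hx : c ∈ (pth hT r x).support := (isAncestor_iff hT r).mp hc.1
  have hy : c ∈ (pth hT r y).support := (isAncestor_iff hT r).mp hc.2.1
  set p1 := (pth hT r x).dropUntil c hx with hp1
  set p2 := (pth hT r y).dropUntil c hy with hp2
  have hinter : ∀ z, z ∈ p1.support → z ∈ p2.support → z = c := by
    intro z hz1 hz2
    have hzx : IsAncestor T r z x := (isAncestor_iff hT r).mpr
      ((pth hT r x).support_dropUntil_subset hx hz1)
    have hzy : IsAncestor T r z y := (isAncestor_iff hT r).mpr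
      ((pth hT r y).support_dropUntil_subset hy hz2)
    have hzc : IsAncestor T r z c := hc.2.2 z hzx hzy
    have : z ∈ ((pth hT r x).takeUntil c hx).support := by
      rw [takeUntil_eq_pth hT r hx]
      exact (isAncestor_iff hT r).mp hzc
    exact takeUntil_dropUntil_inter (pth_isPath hT r x) hx this hz1
  have hwpath : (p1.reverse.append p2).IsPath := by
    apply append_isPath ((pth_isPath hT r x).dropUntil hx).reverse
      ((pth_isPath hT r y).dropUntil hy)
    intro z hz1 hz2
    rw [SimpleGraph.Walk.support_reverse, List.mem_reverse] at hz1
    exact hinter z hz1 hz2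
  have : q = p1.reverse.append p2 :=
    ((hT.existsUnique_path x y).unique hq hwpath)
  rw [this, SimpleGraph.Walk.mem_support_append_iff]
  exact Or.inr (SimpleGraph.Walk.start_mem_support _)

lemma closure_subset (hT : T.IsTree) (r : α) {Y : Set α} (y : α) :
    lcaClosure T r (insert y Y) ⊆
      lcaClosure T r Y ∪ {y} ∪ {z | ∃ u ∈ Y, IsLCA T r z y u} := by
  rintro c ⟨u, hu, w, hw, hc⟩
  rw [Set.mem_insert_iff] at hu hw
  rcases hu with rfl | hu <;> rcases hw with rfl | hw
  · exact Or.inl (Or.inr (isLCA_unique hT r hc (isLCA_self _)))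
  · exact Or.inr ⟨w, hw, hc⟩
  · exact Or.inr ⟨u, hu, isLCA_symm hc⟩
  · exact Or.inl (Or.inl ⟨u, hu, w, hw, hc⟩)

lemma lcas_with_subset (hT : T.IsTree) (r : α) {Y : Set α} (hY : Y.Nonempty) (y : α) :
    ∃ a, {z | ∃ u ∈ Y, IsLCA T r z y u} ⊆ lcaClosure T r Y ∪ {a} := by
  classical
  set L : Set α := {z | ∃ u ∈ Y, IsLCA T r z y u} with hL
  have hLfin : L.Finite := Set.toFinite _
  obtain ⟨u₀, hu₀⟩ := hY
  obtain ⟨a₀, ha₀⟩ := exists_isLCA hT r y u₀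
  have hLne : L.Nonempty := ⟨a₀, u₀, hu₀, ha₀⟩
  obtain ⟨a, haL, hamax⟩ := Set.exists_max_image L (depth hT r) hLfin hLne
  obtain ⟨ua, hua, haLCA⟩ := haL
  refine ⟨a, fun b hb => ?_⟩
  by_cases hba : b = a
  · exact Or.inr (hba ▸ rfl)
  obtain ⟨u, hu, hbLCA⟩ := hb
  -- b and a are both ancestors of y, and a has max depth, so b anc a
  have hbanca : IsAncestor T r b a := by
    rcases anc_comparable hT r hbLCA.1 haLCA.1 with h | h
    · exact h
    · exfalso
      have := depth_lt_of_mem hT r ((isAncestor_iff hT r).mp h) (Ne.symm hba)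
      have := hamax b ⟨u, hu, hbLCA⟩
      omega
  obtain ⟨d, hd⟩ := exists_isLCA hT r ua u
  rcases anc_comparable hT r hd.1 haLCA.2.1 with h | h
  · -- d anc a : show b = d
    have hbd : b = d := by
      apply anc_antisymm hT r
      · exact hd.2.2 b (anc_trans hT r hbanca haLCA.2.1) hbLCA.2.1
      · exact hbLCA.2.2 d (anc_trans hT r h haLCA.1) hd.2.1
    exact Or.inl (hbd ▸ ⟨ua, hua, u, hu, hd⟩)
  · -- a anc d : then a anc b, so b = a, contradiction
    exfalso
    exact hba (anc_antisymm hT r hbanca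
      (hbLCA.2.2 a haLCA.1 (anc_trans hT r h hd.2.1)))
end Anc3


section Anc4
variable {α : Type} [DecidableEq α] [Fintype α] {T : SimpleGraph α} {r : α}

lemma closure_card (hT : T.IsTree) (r : α) (s : Finset α) (hs : s.Nonempty) :
    (lcaClosure T r ↑s).ncard ≤ 2 * s.card - 1 := by
  classical
  induction s using Finset.induction_on with
  | empty => exact absurd hs Finset.not_nonempty_empty
  | @insert a s ha ih =>
    by_cases hsne : s.Nonempty
    · have hih := ih hsne
      obtain ⟨b, hb⟩ := lcas_with_subset hT r (Finset.coe_nonempty.mpr hsne) a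
      have hsub : lcaClosure T r ↑(insert a s) ⊆
          (lcaClosure T r ↑s ∪ {b}) ∪ {a} := by
        rw [Finset.coe_insert]
        intro c hc
        rcases closure_subset hT r a hc with (h | h) | h
        · exact Or.inl (Or.inl h)
        · exact Or.inr h
        · rcases hb h with h' | h'
          · exact Or.inl (Or.inl h')
          · exact Or.inl (Or.inr h')
      have h1 : (lcaClosure T r ↑(insert a s)).ncard ≤
          ((lcaClosure T r ↑s ∪ {b}) ∪ {a}).ncard :=
        Set.ncard_le_ncard hsub (Set.toFinite _)
      have h2 : ((lcaClosure T r ↑s ∪ {b}) ∪ {a}).ncard ≤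
          (lcaClosure T r ↑s ∪ {b}).ncard + 1 := by
        simpa using Set.ncard_union_le (lcaClosure T r ↑s ∪ {b}) {a}
      have h3 : (lcaClosure T r ↑s ∪ {b}).ncard ≤ (lcaClosure T r ↑s).ncard + 1 := by
        simpa using Set.ncard_union_le (lcaClosure T r ↑s) {b}
      have hcard : (insert a s).card = s.card + 1 := Finset.card_insert_of_notMem ha
      have hpos := Finset.card_pos.mpr hsne
      omega
    · rw [Finset.not_nonempty_iff_eq_empty] at hsne
      subst hsne
      have hsub : lcaClosure T r ↑(insert a (∅ : Finset α)) ⊆ {a} := by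
        rintro c ⟨u, hu, w, hw, hc⟩
        simp only [Finset.coe_insert, Finset.coe_empty, Set.mem_insert_iff,
          Set.mem_empty_iff_false, or_false] at hu hw
        subst hu; subst hw
        exact isLCA_unique hT r hc (isLCA_self _)
      have := Set.ncard_le_ncard hsub (Set.toFinite _)
      simpa using this
end Anc4

section Anc5
variable {α : Type} [DecidableEq α] [Fintype α] {T : SimpleGraph α} {r : α} {Y C : Set α}

lemma nbhd_subset_closure (hcomp : IsCompOfDel T (lcaClosure T r Y) C) :
    nbhdSet T C ⊆ lcaClosure T r Y := by
  rintro z ⟨hz, u, hu, hadj⟩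
  by_contra hzX
  exact hz (hcomp.2.2 u hu z hadj hzX)

lemma nbhd_path (hcomp : IsCompOfDel T (lcaClosure T r Y) C) {x1 x2 : α}
    (h1 : x1 ∈ nbhdSet T C) (h2 : x2 ∈ nbhdSet T C) :
    ∃ q : T.Walk x1 x2, q.IsPath ∧ ∀ z ∈ q.support, z = x1 ∨ z = x2 ∨ z ∈ C := by
  obtain ⟨hx1, u1, hu1, hadj1⟩ := h1
  obtain ⟨hx2, u2, hu2, hadj2⟩ := h2
  obtain ⟨w0⟩ := hcomp.2.1.preconnected ⟨u1, hu1⟩ ⟨u2, hu2⟩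
  set wmap : T.Walk u1 u2 := w0.map (SimpleGraph.Embedding.induce C).toHom with hwmap
  have hwsup : ∀ z ∈ wmap.support, z ∈ C := by
    intro z hz
    have hz2 : z ∈ (w0.map (SimpleGraph.Embedding.induce C).toHom).support := hz
    rw [SimpleGraph.Walk.support_map, List.mem_map] at hz2
    obtain ⟨⟨z', hz'⟩, _, rfl⟩ := hz2
    exact hz'
  set w : T.Walk x1 x2 := SimpleGraph.Walk.cons hadj1.symm (wmap.concat hadj2) with hw
  refine ⟨w.toPath, w.toPath.2, fun z hz => ?_⟩
  have hz' : z ∈ w.support := w.support_toPath_subset hz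
  rw [hw, SimpleGraph.Walk.support_cons, List.mem_cons] at hz'
  rcases hz' with hz' | hz'
  · exact Or.inl hz'
  · rw [SimpleGraph.Walk.support_concat,
      List.mem_append, List.mem_singleton] at hz'
    rcases hz' with hz' | hz'
    · exact Or.inr (Or.inr (hwsup z hz'))
    · exact Or.inr (Or.inl hz')

lemma nbhd_comparable (hT : T.IsTree) (r : α)
    (hcomp : IsCompOfDel T (lcaClosure T r Y) C) {x1 x2 : α}
    (h1 : x1 ∈ nbhdSet T C) (h2 : x2 ∈ nbhdSet T C) :
    IsAncestor T r x1 x2 ∨ IsAncestor T r x2 x1 := by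
  obtain ⟨c, hc⟩ := exists_isLCA hT r x1 x2
  have hcX : c ∈ lcaClosure T r Y :=
    lca_mem_closure hT r (nbhd_subset_closure hcomp h1) (nbhd_subset_closure hcomp h2) hc
  obtain ⟨q, hq, hqsup⟩ := nbhd_path hcomp h1 h2
  rcases hqsup c (lca_mem_path hT r hc hq) with rfl | rfl | hcC
  · exact Or.inl hc.2.1
  · exact Or.inr hc.1
  · exact absurd hcX (Set.disjoint_left.mp hcomp.1 hcC)

lemma nbhd_no_middle (hT : T.IsTree) (r : α)
    (hcomp : IsCompOfDel T (lcaClosure T r Y) C) {a b c : α}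
    (ha : a ∈ nbhdSet T C) (hb : b ∈ nbhdSet T C) (hc : c ∈ nbhdSet T C)
    (hab : a ≠ b) (hbc : b ≠ c) (hac : a ≠ c)
    (h1 : IsAncestor T r a b) (h2 : IsAncestor T r b c) : False := by
  obtain ⟨q, hq, hqsup⟩ := nbhd_path hcomp ha hc
  have hbc' : b ∈ (pth hT r c).support := (isAncestor_iff hT r).mp h2
  have hac' : a ∈ (pth hT r c).support :=
    (isAncestor_iff hT r).mp (anc_trans hT r h1 h2)
  have hbdrop : b ∈ ((pth hT r c).dropUntil a hac').support := by
    have := hbc'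
    rw [← (pth hT r c).take_spec hac', SimpleGraph.Walk.mem_support_append_iff] at this
    rcases this with h | h
    · exfalso
      rw [takeUntil_eq_pth hT r hac'] at h
      exact hab (anc_antisymm hT r h1 ((isAncestor_iff hT r).mpr h))
    · exact h
  have hqeq : (pth hT r c).dropUntil a hac' = q :=
    (hT.existsUnique_path a c).unique ((pth_isPath hT r c).dropUntil hac') hq
  rcases hqsup b (hqeq ▸ hbdrop) with h | h | h
  · exact hab h.symm
  · exact hbc h
  · exact Set.disjoint_left.mp hcomp.1 h (nbhd_subset_closure hcomp hb)

lemma nbhd_card_le (hT : T.IsTree) (r : α)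
    (hcomp : IsCompOfDel T (lcaClosure T r Y) C) : (nbhdSet T C).ncard ≤ 2 := by
  by_contra hlt
  push_neg at hlt
  obtain ⟨t, hts, htc⟩ := Set.exists_subset_card_eq (show 3 ≤ (nbhdSet T C).ncard from hlt)
  obtain ⟨x, y, z, hxy, hxz, hyz, rfl⟩ := Set.ncard_eq_three.mp htc
  have hx := hts (by simp : x ∈ ({x, y, z} : Set α))
  have hy := hts (by simp : y ∈ ({x, y, z} : Set α))
  have hz := hts (by simp : z ∈ ({x, y, z} : Set α))
  have no3 : ∀ a b c, a ∈ nbhdSet T C → b ∈ nbhdSet T C → c ∈ nbhdSet T C →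
      a ≠ b → b ≠ c → a ≠ c → IsAncestor T r a b → IsAncestor T r b c → False :=
    fun a b c ha hb hc h1 h2 h3 h4 h5 => nbhd_no_middle hT r hcomp ha hb hc h1 h2 h3 h4 h5
  rcases nbhd_comparable hT r hcomp hx hy with h1 | h1 <;>
    rcases nbhd_comparable hT r hcomp hy hz with h2 | h2 <;>
      rcases nbhd_comparable hT r hcomp hx hz with h3 | h3
  · exact no3 x y z hx hy hz hxy hyz hxz h1 h2
  · exact no3 x y z hx hy hz hxy hyz hxz h1 h2
  · exact no3 x z y hx hz hy hxz hyz.symm hxy h3 h2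
  · exact no3 z x y hz hx hy (Ne.symm hxz) hxy (Ne.symm hyz) h3 h1
  · exact no3 y x z hy hx hz (Ne.symm hxy) hxz hyz h1 h3
  · exact no3 y z x hy hz hx hyz (Ne.symm hxz) (Ne.symm hxy) h2 h3
  · exact no3 x z y hx hz hy hxz hyz.symm hxy h3 h2
  · exact no3 z y x hz hy hx hyz.symm (Ne.symm hxy) (Ne.symm hxz) h2 h1

end Anc5


/-- the LCA closure of a set of `m` vertices of a rooted tree has at most
`2m - 1` elements, and every component of `T - X` has at most two neighbors. -/
theorem lca_closure_bound {α : Type} [Fintype α] (m : ℕ) (hm : 0 < m)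
    (T : SimpleGraph α) (hT : T.IsTree) (r : α) (Y : Set α) (hY : Y.ncard = m) :
    (lcaClosure T r Y).ncard ≤ 2 * m - 1 ∧
      ∀ C : Set α, IsCompOfDel T (lcaClosure T r Y) C → (nbhdSet T C).ncard ≤ 2 := by
  classical
  constructor
  · have hYfin : Y.Finite := Set.toFinite Y
    have hcoe : ↑hYfin.toFinset = Y := hYfin.coe_toFinset
    have hcard : hYfin.toFinset.card = m := by
      rw [← hY, ← Set.ncard_coe_finset, hcoe]
    have hsne : hYfin.toFinset.Nonempty := Finset.card_pos.mp (by omega)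
    have := closure_card hT r hYfin.toFinset hsne
    rwa [hcoe, hcard] at this
  · intro C hcomp
    exact nbhd_card_le hT r hcomp
end

section
/- Let T be a rooted tree and let Q be a collection of connected subgraphs of T whose vertex sets partition V(T). For X ⊆ V(T), write Q(X) = {Q ∈ Q : V(Q) ∩ X ≠ ∅}. Let X, Y ⊆ V(T) with X ⊆ Y and LCA(T,X) = X. If Q(X) = Q(Y), then Q(Y) = Q(LCA(T,Y)). -/
open SimpleGraph

section AuxLCA
open SimpleGraph Walk

variable {β : Type} [DecidableEq β] {T : SimpleGraph β}

private lemma aux_exit {r u x : β} (q : T.Walk r u) (hx : x ∈ q.support) (hxu : x ≠ u) :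
    ∃ c, T.Adj x c ∧ c ∈ q.support ∧ ∃ p : T.Walk c u, x ∉ p.support := by
  have hx' : x ∈ q.reverse.support := by rwa [Walk.support_reverse, List.mem_reverse]
  have hcount : (q.reverse.takeUntil x hx').support.count x = 1 :=
    q.reverse.count_support_takeUntil_eq_one hx'
  obtain ⟨c, hadj, p, hp⟩ := Walk.exists_eq_cons_of_ne hxu (q.reverse.takeUntil x hx').reverse
  have hsup : (q.reverse.takeUntil x hx').reverse.support = x :: p.support := by
    rw [hp, Walk.support_cons]
  refine ⟨c, hadj, ?_, p, ?_⟩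
  · have hc : c ∈ (q.reverse.takeUntil x hx').reverse.support := by
      rw [hsup]; exact List.mem_cons_of_mem _ p.start_mem_support
    rw [Walk.support_reverse, List.mem_reverse] at hc
    have := q.reverse.support_takeUntil_subset hx' hc
    rw [Walk.support_reverse, List.mem_reverse] at this
    exact this
  · intro hxp
    have : ((q.reverse.takeUntil x hx').reverse.support.count x) = 1 := by
      rw [Walk.support_reverse, List.count_reverse]; exact hcount
    rw [hsup, List.count_cons_self] at this
    have : p.support.count x = 0 := by omega
    exact (List.count_eq_zero.mp this) hxp

private lemma aux_nbr_eq (hT : T.IsAcyclic) {x c₁ c₂ : β} (h1 : T.Adj x c₁) (h2 : T.Adj x c₂)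
    (p : T.Walk c₁ c₂) (hp : x ∉ p.support) : c₁ = c₂ := by
  by_contra hne
  have hxP1 : x ∉ (p.toPath : T.Walk c₁ c₂).support := fun h => hp (p.support_toPath_subset h)
  have hw2 : (Walk.cons h1.symm (Walk.cons h2 Walk.nil) : T.Walk c₁ c₂).IsPath := by
    rw [Walk.isPath_def]
    simp [Walk.support_cons, h1.ne', h2.ne, hne, Ne.symm (h1.ne')]
  have := hT.path_unique p.toPath ⟨_, hw2⟩
  apply hxP1
  rw [this]
  simp

private lemma aux_anc_trans {r x u u' : β} (h : IsAncestor T r x u)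
    (p : T.Walk u u') (hp : x ∉ p.support) : IsAncestor T r x u' := by
  intro q
  by_contra hq
  have := h (q.append p.reverse)
  rw [Walk.mem_support_append_iff] at this
  rcases this with h' | h'
  · exact hq h'
  · rw [Walk.support_reverse, List.mem_reverse] at h'
    exact hp h'

private lemma aux_anc_exit (hT : T.IsAcyclic) {r x v c : β} (hxv : IsAncestor T r x v)
    (hne : x ≠ v) (hadj : T.Adj x c) (pc : T.Walk c v) (hpc : x ∉ pc.support) :
    IsAncestor T r c v := by
  intro q
  obtain ⟨c₁, hadj1, hc1mem, p₁, hp₁⟩ := aux_exit q (hxv q) hne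
  have hcc : c₁ = c := by
    refine aux_nbr_eq hT hadj1 hadj (p₁.append pc.reverse) ?_
    rw [Walk.mem_support_append_iff]
    rintro (h | h)
    · exact hp₁ h
    · rw [Walk.support_reverse, List.mem_reverse] at h; exact hpc h
  exact hcc ▸ hc1mem

private lemma aux_drop_avoid {a b y : β} (p : T.Walk a b) (hp : p.IsPath)
    (hy : y ∈ p.support) (hya : y ≠ a) : a ∉ (p.dropUntil y hy).support := by
  have hspec := p.take_spec hy
  have hnodup : p.support.Nodup := hp.support_nodup
  rw [← hspec, Walk.support_append] at hnodup
  have ha : a ∈ (p.takeUntil y hy).support := (p.takeUntil y hy).start_mem_support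
  rw [List.nodup_append] at hnodup
  have htail : a ∉ (p.dropUntil y hy).support.tail := fun h => hnodup.2.2 a ha a h rfl
  intro hmem
  rw [(p.dropUntil y hy).support_eq_cons, List.mem_cons] at hmem
  rcases hmem with h | h
  · exact hya h.symm
  · exact htail h

private lemma aux_take_avoid {a b y : β} (p : T.Walk a b) (hp : p.IsPath)
    (hy : y ∈ p.support) (hyb : y ≠ b) : b ∉ (p.takeUntil y hy).support := by
  have hspec := p.take_spec hy
  have hnodup : p.support.Nodup := hp.support_nodup
  rw [← hspec, Walk.support_append] at hnodup
  rw [List.nodup_append] at hnodup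
  intro hmem
  have hb : b ∈ (p.dropUntil y hy).support := (p.dropUntil y hy).end_mem_support
  rw [(p.dropUntil y hy).support_eq_cons, List.mem_cons] at hb
  rcases hb with h | h
  · exact hyb h.symm
  · exact hnodup.2.2 b hmem b h rfl

private lemma aux_not_avoid (hT : T.IsTree) {r x u w : β}
    (hxu' : IsAncestor T r x u) (hxw' : IsAncestor T r x w)
    (hmin : ∀ y, IsAncestor T r y u → IsAncestor T r y w → IsAncestor T r y x)
    (hxu : x ≠ u) (hxw : x ≠ w)
    (s : T.Walk u w) (hs : x ∉ s.support) : False := by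
  obtain ⟨q0⟩ := hT.isConnected.preconnected r u
  obtain ⟨c, hadj, -, pc, hpc⟩ := aux_exit q0 (hxu' q0) hxu
  have hancu : IsAncestor T r c u := aux_anc_exit hT.IsAcyclic hxu' hxu hadj pc hpc
  have hancw : IsAncestor T r c w := by
    refine aux_anc_exit hT.IsAcyclic hxw' hxw hadj (pc.append s) ?_
    rw [Walk.mem_support_append_iff]
    rintro (h | h)
    exacts [hpc h, hs h]
  have hancx := hmin c hancu hancw
  obtain ⟨pr0⟩ := hT.isConnected.preconnected r x
  by_cases hc : c ∈ (pr0.toPath : T.Walk r x).support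
  · have hxtake : x ∉ ((pr0.toPath : T.Walk r x).takeUntil c hc).support :=
      aux_take_avoid _ pr0.toPath.2 hc hadj.ne'
    have := hxu' (((pr0.toPath : T.Walk r x).takeUntil c hc).append pc)
    rw [Walk.mem_support_append_iff] at this
    rcases this with h | h
    exacts [hxtake h, hpc h]
  · exact hc (hancx _)

private lemma aux_lca_transfer (hT : T.IsTree) {r x u w u' w' : β}
    (hlca : IsLCA T r x u w) (hxu : x ≠ u) (hxw : x ≠ w)
    (p1 : T.Walk u u') (hp1 : x ∉ p1.support)
    (p2 : T.Walk w w') (hp2 : x ∉ p2.support) : IsLCA T r x u' w' := by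
  obtain ⟨hxu', hxw', hmin⟩ := hlca
  refine ⟨aux_anc_trans hxu' p1 hp1, aux_anc_trans hxw' p2 hp2, ?_⟩
  intro y hyu' hyw' q
  by_contra hyq
  have hyx : y ≠ x := fun h => hyq (h ▸ q.end_mem_support)
  obtain ⟨P10⟩ := hT.isConnected.preconnected x u'
  have hy1 : y ∈ (P10.toPath : T.Walk x u').support := by
    have := hyu' (q.append (P10.toPath : T.Walk x u'))
    rw [Walk.mem_support_append_iff] at this
    exact this.resolve_left hyq
  have hd1 : x ∉ ((P10.toPath : T.Walk x u').dropUntil y hy1).support :=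
    aux_drop_avoid _ P10.toPath.2 hy1 hyx
  obtain ⟨P20⟩ := hT.isConnected.preconnected x w'
  have hy2 : y ∈ (P20.toPath : T.Walk x w').support := by
    have := hyw' (q.append (P20.toPath : T.Walk x w'))
    rw [Walk.mem_support_append_iff] at this
    exact this.resolve_left hyq
  have hd2 : x ∉ ((P20.toPath : T.Walk x w').dropUntil y hy2).support :=
    aux_drop_avoid _ P20.toPath.2 hy2 hyx
  refine aux_not_avoid hT hxu' hxw' hmin hxu hxw
    ((p1.append ((P10.toPath : T.Walk x u').dropUntil y hy1).reverse).append
      (((P20.toPath : T.Walk x w').dropUntil y hy2).append p2.reverse)) ?_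
  intro hmem
  rw [Walk.mem_support_append_iff, Walk.mem_support_append_iff,
    Walk.mem_support_append_iff] at hmem
  rcases hmem with (h | h) | (h | h)
  · exact hp1 h
  · rw [Walk.support_reverse, List.mem_reverse] at h; exact hd1 h
  · exact hd2 h
  · rw [Walk.support_reverse, List.mem_reverse] at h; exact hp2 h


end AuxLCA

/-- for a collection `Qa` of connected subgraphs of a rooted tree `T` whose
vertex sets partition `V(T)`, if `X ⊆ Y`, `X` is LCA-closed, and the members meeting `X`
are exactly those meeting `Y`, then the members meeting `Y` are exactly those meeting the
LCA closure of `Y`. -/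
theorem lca_closure_parts {α : Type} [Fintype α] (T : SimpleGraph α) (hT : T.IsTree)
    (r : α) (Qa : Set (Set α))
    (hconn : ∀ Q ∈ Qa, (T.induce Q).Connected)
    (hpart : ∀ x : α, ∃! Q, Q ∈ Qa ∧ x ∈ Q)
    (X Y : Set α) (hXY : X ⊆ Y) (hX : lcaClosure T r X = X)
    (hQ : {Q ∈ Qa | (Q ∩ X).Nonempty} = {Q ∈ Qa | (Q ∩ Y).Nonempty}) :
    {Q ∈ Qa | (Q ∩ Y).Nonempty} = {Q ∈ Qa | (Q ∩ lcaClosure T r Y).Nonempty} := by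
    classical
  ext Q
  simp only [Set.mem_setOf_eq]
  constructor
  · rintro ⟨hQa, y, hy⟩
    exact ⟨hQa, y, hy.1, y, hy.2, y, hy.2,
      fun q => q.end_mem_support, fun q => q.end_mem_support, fun z h _ => h⟩
  · rintro ⟨hQa, x, hxQ, u, huY, w, hwY, hlca⟩
    refine ⟨hQa, ?_⟩
    by_contra hne
    have hxY : x ∉ Y := fun h => hne ⟨x, hxQ, h⟩
    have hxu : x ≠ u := fun h => hxY (h ▸ huY)
    have hxw : x ≠ w := fun h => hxY (h ▸ hwY)
    obtain ⟨Pu, ⟨hPuQa, huPu⟩, -⟩ := hpart u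
    obtain ⟨Pw, ⟨hPwQa, hwPw⟩, -⟩ := hpart w
    have hxPu : x ∉ Pu := by
      intro h
      obtain ⟨R, -, hRuniq⟩ := hpart x
      have h1 := hRuniq Q ⟨hQa, hxQ⟩
      have h2 := hRuniq Pu ⟨hPuQa, h⟩
      exact hne ⟨u, by rw [h1, ← h2]; exact huPu, huY⟩
    have hxPw : x ∉ Pw := by
      intro h
      obtain ⟨R, -, hRuniq⟩ := hpart x
      have h1 := hRuniq Q ⟨hQa, hxQ⟩
      have h2 := hRuniq Pw ⟨hPwQa, h⟩
      exact hne ⟨w, by rw [h1, ← h2]; exact hwPw, hwY⟩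
    have hPuX : (Pu ∩ X).Nonempty := by
      have : Pu ∈ {Q ∈ Qa | (Q ∩ Y).Nonempty} := ⟨hPuQa, u, huPu, huY⟩
      rw [← hQ] at this
      exact this.2
    have hPwX : (Pw ∩ X).Nonempty := by
      have : Pw ∈ {Q ∈ Qa | (Q ∩ Y).Nonempty} := ⟨hPwQa, w, hwPw, hwY⟩
      rw [← hQ] at this
      exact this.2
    obtain ⟨u', hu'Pu, hu'X⟩ := hPuX
    obtain ⟨w', hw'Pw, hw'X⟩ := hPwX
    obtain ⟨pw1⟩ := (hconn Pu hPuQa).preconnected ⟨u, huPu⟩ ⟨u', hu'Pu⟩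
    obtain ⟨pw2⟩ := (hconn Pw hPwQa).preconnected ⟨w, hwPw⟩ ⟨w', hw'Pw⟩
    have hp1 : x ∉ (pw1.map (SimpleGraph.Embedding.induce Pu).toHom).support := by
      intro h
      rw [Walk.support_map, List.mem_map] at h
      obtain ⟨a, -, ha⟩ := h
      exact hxPu (ha ▸ a.2)
    have hp2 : x ∉ (pw2.map (SimpleGraph.Embedding.induce Pw).toHom).support := by
      intro h
      rw [Walk.support_map, List.mem_map] at h
      obtain ⟨a, -, ha⟩ := h
      exact hxPw (ha ▸ a.2)
    have hlca' : IsLCA T r x u' w' :=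
      aux_lca_transfer hT hlca hxu hxw _ hp1 _ hp2
    have : x ∈ lcaClosure T r X := ⟨u', hu'X, w', hw'X, hlca'⟩
    rw [hX] at this
    exact hxY (hXY this)
end

section
/- Let G be a graph, p and m positive integers, and P a partition of V(G) such that every part of P has at most m elements. Then χ_p(G) ≤ m · χ_p(G/P). -/
open SimpleGraph

section Aux

private lemma injective_isCentered {W : Type*} {β : Type*} (p : ℕ) (G : SimpleGraph W)
    (φ : W → β) (hφ : Function.Injective φ) : IsCenteredColoring p G φ := by
  intro H hH
  right
  obtain ⟨u, hu⟩ := hH.nonempty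
  exact ⟨u, hu, fun w _ hne heq => hne (hφ heq)⟩

end Aux

/-- if every part of a vertex partition `Pa` of `G` has at most `m`
elements, then `χ_p(G) ≤ m * χ_p(G/Pa)`. -/
theorem centered_chromatic_quotient {V : Type} [Fintype V] (G : SimpleGraph V)
    (p m : ℕ) (hp : 0 < p) (hm : 0 < m) (Pa : Set (Set V))
    (hPa : IsVertexPartition Pa) (hsize : ∀ P ∈ Pa, P.ncard ≤ m) :
    centeredChromaticNumber p G ≤ m * centeredChromaticNumber p (quotientGraph G Pa) := by
  classical
  set Q := quotientGraph G Pa with hQdef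
  set k := centeredChromaticNumber p Q with hkdef
  -- obtain an optimal p-centered coloring of the quotient
  have hne : {n | ∃ φ : Pa → Fin n, IsCenteredColoring p Q φ}.Nonempty := by
    haveI : Fintype ↥Pa := (Set.toFinite Pa).fintype
    exact ⟨Fintype.card ↥Pa, Fintype.equivFin ↥Pa,
      injective_isCentered _ _ _ (Fintype.equivFin ↥Pa).injective⟩
  have hk_mem : k ∈ {n | ∃ φ : Pa → Fin n, IsCenteredColoring p Q φ} := by
    rw [hkdef]
    exact Nat.sInf_mem hne
  obtain ⟨φ, hφ⟩ := hk_mem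
  -- the part containing each vertex
  have hex : ∀ u : V, ∃ P, (P ∈ Pa ∧ u ∈ P) ∧ ∀ y, (y ∈ Pa ∧ u ∈ y) → y = P :=
    fun u => hPa.2 u
  choose part hpart huniq using hex
  set part' : V → ↥Pa := fun u => ⟨part u, (hpart u).1⟩ with hpart'def
  -- an enumeration of the vertices
  set enum : V → ℕ := fun v => ((Fintype.equivFin V) v : ℕ) with henumdef
  have henum_inj : Function.Injective enum :=
    fun a b h => (Fintype.equivFin V).injective (Fin.val_injective h)
  -- index of a vertex within its part
  set idx : V → ℕ := fun u => ((part u) ∩ {w | enum w < enum u}).ncard with hidxdef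
  have hidx_lt : ∀ u, idx u < m := by
    intro u
    have hsub : (part u) ∩ {w | enum w < enum u} ⊆ (part u) \ {u} := by
      rintro w ⟨h1, h2⟩
      simp only [Set.mem_setOf_eq] at h2
      refine ⟨h1, ?_⟩
      simp only [Set.mem_singleton_iff]
      rintro rfl
      exact lt_irrefl _ h2
    calc idx u ≤ ((part u) \ {u}).ncard := Set.ncard_le_ncard hsub (Set.toFinite _)
      _ < (part u).ncard := Set.ncard_diff_singleton_lt_of_mem (hpart u).2 (Set.toFinite _)
      _ ≤ m := hsize _ (hpart u).1
  have hidx_mono : ∀ u w, part u = part w → enum u < enum w → idx u < idx w := by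
    intro u w hpw hlt
    have hss : (part u) ∩ {z | enum z < enum u} ⊂ (part w) ∩ {z | enum z < enum w} := by
      constructor
      · rintro z ⟨h1, h2⟩
        exact ⟨hpw ▸ h1, lt_trans h2 hlt⟩
      · intro hcon
        have : u ∈ (part u) ∩ {z | enum z < enum u} :=
          hcon ⟨hpw ▸ (hpart u).2, hlt⟩
        simp only [Set.mem_inter_iff, Set.mem_setOf_eq] at this
        exact lt_irrefl _ this.2
    exact Set.ncard_lt_ncard hss (Set.toFinite _)
  have hidx_inj : ∀ u w, part u = part w → idx u = idx w → u = w := by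
    intro u w hpw hieq
    by_contra hne
    rcases lt_trichotomy (enum u) (enum w) with h | h | h
    · exact absurd hieq (Nat.ne_of_lt (hidx_mono u w hpw h))
    · exact hne (henum_inj h)
    · exact absurd hieq.symm (Nat.ne_of_lt (hidx_mono w u hpw.symm h))
  -- the coloring of G
  set ψ : V → Fin (m * k) :=
    fun u => finProdFinEquiv (⟨idx u, hidx_lt u⟩, φ (part' u)) with hψdef
  have hψcentered : IsCenteredColoring p G ψ := by
    intro H hH
    obtain ⟨u₀, hu₀⟩ := hH.nonempty
    -- the projected subgraph of the quotient
    set H' : Q.Subgraph :=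
      { verts := part' '' H.verts
        Adj := fun P R => P ≠ R ∧
          ∃ u ∈ H.verts, ∃ w ∈ H.verts, part' u = P ∧ part' w = R ∧ H.Adj u w
        adj_sub := by
          rintro P R ⟨hne, u, hu, w, hw, rfl, rfl, hadj⟩
          exact ⟨hne, u, (hpart u).2, w, (hpart w).2, hadj.adj_sub⟩
        edge_vert := by
          rintro P R ⟨hne, u, hu, w, hw, rfl, h2, hadj⟩
          exact ⟨u, hu, rfl⟩
        symm := by
          constructor
          rintro P R ⟨hne, u, hu, w, hw, h1, h2, hadj⟩
          exact ⟨hne.symm, w, hw, u, hu, h2, h1, hadj.symm⟩ } with hH'def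
    have hreach : ∀ (a b : H.verts) (q : H.coe.Walk a b),
        H'.coe.Reachable ⟨part' a.1, ⟨a.1, a.2, rfl⟩⟩ ⟨part' b.1, ⟨b.1, b.2, rfl⟩⟩ := by
      intro a b q
      induction q with
      | nil => exact Reachable.refl _
      | @cons a c b hadj q ih =>
        by_cases hpc : part' a.1 = part' c.1
        · have h2 : (⟨part' a.1, ⟨a.1, a.2, rfl⟩⟩ : H'.verts)
              = ⟨part' c.1, ⟨c.1, c.2, rfl⟩⟩ := Subtype.ext hpc
          rw [h2]
          exact ih
        · refine Reachable.trans (SimpleGraph.Adj.reachable ?_) ih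
          exact ⟨hpc, a.1, a.2, c.1, c.2, rfl, rfl, hadj⟩
    have hconn' : H'.Connected := by
      rw [SimpleGraph.Subgraph.connected_iff]
      refine ⟨?_, ⟨part' u₀, u₀, hu₀, rfl⟩⟩
      rw [SimpleGraph.Subgraph.preconnected_iff]
      rintro ⟨P, a, ha, rfl⟩ ⟨R, b, hb, rfl⟩
      obtain ⟨q⟩ := hH.preconnected.coe ⟨a, ha⟩ ⟨b, hb⟩
      exact hreach ⟨a, ha⟩ ⟨b, hb⟩ q
    rcases hφ H' hconn' with hbig | ⟨P, hPmem, hPuniq⟩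
    · left
      have himg : φ '' H'.verts = (fun u => φ (part' u)) '' H.verts := by
        show φ '' (part' '' H.verts) = _
        rw [Set.image_image]
      have himg2 : (fun c : Fin (m * k) => (finProdFinEquiv.symm c).2) '' (ψ '' H.verts)
          = (fun u => φ (part' u)) '' H.verts := by
        rw [Set.image_image]
        apply Set.image_congr
        intro u _
        simp [hψdef]
      calc p < (φ '' H'.verts).ncard := hbig
        _ = ((fun c : Fin (m * k) => (finProdFinEquiv.symm c).2) '' (ψ '' H.verts)).ncard := by
          rw [himg, himg2]
        _ ≤ (ψ '' H.verts).ncard := Set.ncard_image_le (Set.toFinite _)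
    · right
      obtain ⟨u₁, hu₁, rfl⟩ := hPmem
      refine ⟨u₁, hu₁, fun w hw hne heq => ?_⟩
      have hpair := finProdFinEquiv.injective heq
      have h2 : φ (part' w) = φ (part' u₁) := congrArg Prod.snd hpair
      have hpw : part' w = part' u₁ := by
        by_contra hne'
        exact hPuniq (part' w) ⟨w, hw, rfl⟩ hne' h2
      have hpeq : part w = part u₁ := congrArg Subtype.val hpw
      have h1 : idx w = idx u₁ := congrArg (fun x => (x.1 : ℕ)) hpair
      exact hne (hidx_inj w u₁ hpeq h1)
  exact Nat.sInf_le ⟨ψ, hψcentered⟩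
end

section
/- Let t be an integer with t ≥ 2. For every K_t-minor-free graph G, every subset R = {r_1,…,r_{t−2}} of V(G) of size t−2 such that G − R is connected, and every family F of connected subgraphs of G − R each of which contains a neighbor (in G) of every vertex of R, the family F does not contain t pairwise vertex-disjoint members. -/
open SimpleGraph

lemma walk_anchor {V : Type} [Fintype V] [DecidableEq V] {t : ℕ} (G : SimpleGraph V)
    (R : Finset V) (f : Fin t → G.Subgraph)
    (hdisj : ∀ i j, i ≠ j → Disjoint (f i).verts (f j).verts)
    (hfc : ∀ k, (G.induce (f k).verts).Connected)
    (hfR : ∀ k, Disjoint (f k).verts (R : Set V))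
    (i j : Fin t) (hij : j ≠ i) :
    ∀ {a b : ↥((R : Set V)ᶜ)} (_ : (G.induce ((R : Set V)ᶜ)).Walk a b),
      (b : V) ∈ (f j).verts →
      ∀ B : Set V, (a : V) ∈ B → (f i).verts ⊆ B →
        (∀ k, k ≠ i → Disjoint B (f k).verts) → Disjoint B (R : Set V) →
        (G.induce B).Connected →
      ∃ i' j' : Fin t, i' ≠ j' ∧ ∃ B' : Set V, (f i').verts ⊆ B' ∧
        (∀ k, k ≠ i' → Disjoint B' (f k).verts) ∧ Disjoint B' (R : Set V) ∧
        (G.induce B').Connected ∧ ∃ u ∈ B', ∃ w ∈ (f j').verts, G.Adj u w := by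
  intro a b q
  induction q with
  | nil =>
    intro hb B haB _ hdB _ _
    exact absurd hb (Set.disjoint_left.mp (hdB j hij) haB)
  | @cons a a' b h p ih =>
    intro hb B haB hfB hdB hdR hcB
    have hadj : G.Adj (a : V) (a' : V) := h
    by_cases hk : ∃ k, (a' : V) ∈ (f k).verts
    · obtain ⟨k, hk⟩ := hk
      by_cases hki : k = i
      · subst hki
        exact ih hb (f k).verts hk le_rfl
          (fun m hm => hdisj k m hm.symm) (hfR k) (hfc k)
      · exact ⟨i, k, fun e => hki e.symm, B, hfB, hdB, hdR, hcB,
          a, haB, a', hk, hadj⟩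
    · push_neg at hk
      apply ih hb (insert (a' : V) B) (Set.mem_insert _ _)
        (hfB.trans (Set.subset_insert _ _))
      · intro m hm
        rw [Set.insert_eq, Set.disjoint_union_left]
        exact ⟨Set.disjoint_singleton_left.mpr (hk m), hdB m hm⟩
      · rw [Set.insert_eq, Set.disjoint_union_left]
        exact ⟨Set.disjoint_singleton_left.mpr a'.2, hdR⟩
      · have he : insert (a' : V) B = {(a' : V), (a : V)} ∪ B := by
          rw [Set.union_comm]
          simp [Set.union_insert, Set.insert_eq_self.mpr haB, Set.union_comm]
        rw [he]
        exact induce_union_connected (induce_pair_connected_of_adj hadj.symm).preconnected hcB.preconnected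
          ⟨(a : V), Or.inr rfl, haB⟩


/-- if `G` is `K_t`-minor-free, `R` has `t-2` vertices, `G - R` is
connected, and `𝓕` is a family of connected subgraphs of `G - R` each containing a
neighbor of every vertex of `R`, then `𝓕` has no `t` pairwise vertex-disjoint members. -/
theorem no_t_disjoint_members (t : ℕ) (ht : 2 ≤ t) {V : Type} [Fintype V] [DecidableEq V]
    (G : SimpleGraph V) (hminor : CliqueMinorFree G t)
    (R : Finset V) (hR : R.card = t - 2)
    (hconn : (G.induce ((R : Set V)ᶜ)).Connected)
    (𝓕 : Set G.Subgraph)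
    (h𝓕 : ∀ F ∈ 𝓕, F.Connected ∧ Disjoint F.verts (R : Set V) ∧
      ∀ x ∈ R, ∃ u ∈ F.verts, G.Adj x u) :
    ¬ ∃ f : Fin t → G.Subgraph, (∀ i, f i ∈ 𝓕) ∧
        ∀ i j, i ≠ j → Disjoint (f i).verts (f j).verts := by
  rintro ⟨f, hf𝓕, hfd⟩
  have hfc : ∀ k, (G.induce (f k).verts).Connected :=
    fun k => ((h𝓕 _ (hf𝓕 k)).1).induce_verts
  have hfR : ∀ k, Disjoint (f k).verts (R : Set V) := fun k => (h𝓕 _ (hf𝓕 k)).2.1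
  have hfN : ∀ k, ∀ x ∈ R, ∃ u ∈ (f k).verts, G.Adj x u := fun k => (h𝓕 _ (hf𝓕 k)).2.2
  set i0 : Fin t := ⟨0, by omega⟩ with hi0
  set i1 : Fin t := ⟨1, by omega⟩ with hi1
  have h01 : i1 ≠ i0 := by
    intro e; rw [hi0, hi1, Fin.mk.injEq] at e; omega
  obtain ⟨a, ha⟩ := ((h𝓕 _ (hf𝓕 i0)).1).nonempty
  obtain ⟨b, hb⟩ := ((h𝓕 _ (hf𝓕 i1)).1).nonempty
  have haR : a ∈ ((R : Set V)ᶜ) := fun hx => Set.disjoint_left.mp (hfR i0) ha hx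
  have hbR : b ∈ ((R : Set V)ᶜ) := fun hx => Set.disjoint_left.mp (hfR i1) hb hx
  obtain ⟨q⟩ := hconn.preconnected ⟨a, haR⟩ ⟨b, hbR⟩
  obtain ⟨i', j', hij', B, hBsub, hBdisj, hBR, hBconn, u0, hu0, w0, hw0, huw⟩ :=
    walk_anchor G R f hfd hfc hfR i0 i1 h01 q hb (f i0).verts ha le_rfl
      (fun k hk => hfd i0 k hk.symm) (hfR i0) (hfc i0)
  classical
  set sc : Finset (Fin t) := {i', j'}ᶜ with hsc
  have hscmem : ∀ k : Fin t, k ≠ i' → k ≠ j' → k ∈ sc := by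
    intro k h1 h2; simp [hsc, h1, h2]
  have hcard : Fintype.card sc = Fintype.card R := by
    simp only [Fintype.card_coe]
    rw [Finset.card_compl, Finset.card_pair hij', hR, Fintype.card_fin]
  let e : sc ≃ R := Fintype.equivOfCardEq hcard
  set r : Fin t → V := fun k => if h : k ∈ sc then (e ⟨k, h⟩ : V) else a with hr
  have hrR : ∀ k, k ∈ sc → r k ∈ R := by
    intro k h; rw [hr]; simp only [dif_pos h]; exact (e ⟨k, h⟩).2
  have hrinj : ∀ k m, k ∈ sc → m ∈ sc → r k = r m → k = m := by
    intro k m hk hm hkm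
    rw [hr] at hkm; simp only [dif_pos hk, dif_pos hm] at hkm
    have := e.injective (Subtype.ext hkm)
    exact congrArg Subtype.val this
  have hrnB : ∀ m, m ∈ sc → r m ∉ B := fun m hm hmem =>
    Set.disjoint_left.mp hBR hmem (hrR m hm)
  have hrnf : ∀ m, m ∈ sc → ∀ k, r m ∉ (f k).verts := fun m hm k hmem =>
    Set.disjoint_left.mp (hfR k) hmem (hrR m hm)
  set Bf : Fin t → Set V := fun k =>
    if k = i' then B else if k = j' then (f j').verts else insert (r k) (f k).verts
    with hBf
  have hBfi : Bf i' = B := by simp [hBf]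
  have hBfj : Bf j' = (f j').verts := by simp [hBf, hij'.symm]
  have hBfo : ∀ k, k ≠ i' → k ≠ j' → Bf k = insert (r k) (f k).verts := by
    intro k h1 h2; simp [hBf, h1, h2]
  apply hminor
  refine ⟨Bf, ?_, ?_, ?_⟩
  · -- connectivity
    intro k
    by_cases h1 : k = i'
    · rw [h1, hBfi]; exact hBconn
    by_cases h2 : k = j'
    · rw [h2, hBfj]; exact hfc j'
    · rw [hBfo k h1 h2]
      obtain ⟨u, hu, hadj⟩ := hfN k (r k) (hrR k (hscmem k h1 h2))
      have he : insert (r k) (f k).verts = {r k, u} ∪ (f k).verts := by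
        rw [Set.union_comm]
        simp [Set.union_insert, Set.insert_eq_self.mpr hu, Set.union_comm]
      rw [he]
      exact induce_union_connected (induce_pair_connected_of_adj hadj).preconnected (hfc k).preconnected
        ⟨u, Or.inr rfl, hu⟩
  · -- disjointness
    have dBj : Disjoint B (f j').verts := hBdisj j' hij'.symm
    have dBo : ∀ m, m ≠ i' → m ∈ sc → Disjoint B (insert (r m) (f m).verts) := by
      intro m hm hm'
      rw [Set.insert_eq, Set.disjoint_union_right]
      exact ⟨Set.disjoint_singleton_right.mpr (hrnB m hm'), hBdisj m hm⟩
    have djo : ∀ m, m ≠ j' → m ∈ sc →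
        Disjoint (f j').verts (insert (r m) (f m).verts) := by
      intro m hm hm'
      rw [Set.insert_eq, Set.disjoint_union_right]
      exact ⟨Set.disjoint_singleton_right.mpr (hrnf m hm' j'), hfd j' m hm.symm⟩
    have doo : ∀ k m, k ≠ m → k ∈ sc → m ∈ sc →
        Disjoint (insert (r k) (f k).verts) (insert (r m) (f m).verts) := by
      intro k m hkm hk hm
      rw [Set.disjoint_left]
      rintro x (rfl | hx) (h' | h')
      · exact hkm (hrinj k m hk hm h')
      · exact hrnf k hk m h'
      · exact hrnf m hm k (h' ▸ hx)
      · exact Set.disjoint_left.mp (hfd k m hkm) hx h'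
    intro k m hkm
    rcases eq_or_ne k i' with rfl | hk1
    · rcases eq_or_ne m j' with rfl | hm2
      · rw [hBfi, hBfj]; exact dBj
      · rw [hBfi, hBfo m hkm.symm hm2]
        exact dBo m hkm.symm (hscmem m hkm.symm hm2)
    rcases eq_or_ne k j' with rfl | hk2
    · rcases eq_or_ne m i' with rfl | hm1
      · rw [hBfi, hBfj]; exact dBj.symm
      · rw [hBfj, hBfo m hm1 hkm.symm]
        exact djo m hkm.symm (hscmem m hm1 hkm.symm)
    rcases eq_or_ne m i' with rfl | hm1
    · rw [hBfi, hBfo k hk1 hk2]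
      exact (dBo k hk1 (hscmem k hk1 hk2)).symm
    rcases eq_or_ne m j' with rfl | hm2
    · rw [hBfj, hBfo k hk1 hk2]
      exact (djo k hk2 (hscmem k hk1 hk2)).symm
    · rw [hBfo k hk1 hk2, hBfo m hm1 hm2]
      exact doo k m hkm (hscmem k hk1 hk2) (hscmem m hm1 hm2)
  · -- edges
    have eBj : ∃ u ∈ B, ∃ w ∈ (f j').verts, G.Adj u w := ⟨u0, hu0, w0, hw0, huw⟩
    have eBo : ∀ m, m ∈ sc →
        ∃ u ∈ B, ∃ w ∈ insert (r m) (f m).verts, G.Adj u w := by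
      intro m hm
      obtain ⟨u, hu, hadj⟩ := hfN i' (r m) (hrR m hm)
      exact ⟨u, hBsub hu, r m, Set.mem_insert _ _, hadj.symm⟩
    have ejo : ∀ m, m ∈ sc →
        ∃ u ∈ (f j').verts, ∃ w ∈ insert (r m) (f m).verts, G.Adj u w := by
      intro m hm
      obtain ⟨u, hu, hadj⟩ := hfN j' (r m) (hrR m hm)
      exact ⟨u, hu, r m, Set.mem_insert _ _, hadj.symm⟩
    have eoo : ∀ k m, k ∈ sc → ∃ u ∈ insert (r k) (f k).verts,
        ∃ w ∈ insert (r m) (f m).verts, G.Adj u w := by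
      intro k m hk
      obtain ⟨u, hu, hadj⟩ := hfN m (r k) (hrR k hk)
      exact ⟨r k, Set.mem_insert _ _, u, Set.mem_insert_of_mem _ hu, hadj⟩
    have swap : ∀ {s s' : Set V}, (∃ u ∈ s, ∃ w ∈ s', G.Adj u w) →
        ∃ u ∈ s', ∃ w ∈ s, G.Adj u w := by
      rintro s s' ⟨u, hu, w, hw, h⟩; exact ⟨w, hw, u, hu, h.symm⟩
    intro k m hkm
    rcases eq_or_ne k i' with rfl | hk1
    · rcases eq_or_ne m j' with rfl | hm2
      · rw [hBfi, hBfj]; exact eBj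
      · rw [hBfi, hBfo m hkm.symm hm2]
        exact eBo m (hscmem m hkm.symm hm2)
    rcases eq_or_ne k j' with rfl | hk2
    · rcases eq_or_ne m i' with rfl | hm1
      · rw [hBfi, hBfj]; exact swap eBj
      · rw [hBfj, hBfo m hm1 hkm.symm]
        exact ejo m (hscmem m hm1 hkm.symm)
    rcases eq_or_ne m i' with rfl | hm1
    · rw [hBfi, hBfo k hk1 hk2]
      exact swap (eBo k (hscmem k hk1 hk2))
    rcases eq_or_ne m j' with rfl | hm2
    · rw [hBfj, hBfo k hk1 hk2]
      exact swap (ejo k (hscmem k hk1 hk2))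
    · rw [hBfo k hk1 hk2, hBfo m hm1 hm2]
      exact eoo k m (hscmem k hk1 hk2)
end
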